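/- Let ν ∈ ℝ with ν ∉ ℤ_{−ε}, and let ⟨·,·⟩ be an invariant Hermitian form on the deformed module Π(ε,ν) normalized so that ⟨v_0,v_0⟩ = 1 (when ε = 1) or ⟨v_1,v_1⟩ = 1 (when ε = −1). Then ⟨v_i,v_j⟩ = 0 for i ≠ j, and for every m ∈ ℤ_{−ε} one has ⟨v_{m+1}, v_{m+1}⟩ = −sgn(ν² − m²)·⟨v_{m−1}, v_{m−1}⟩; consequently ⟨v_j, v_j⟩ ∈ {1, −1} for every j ∈ ℤ_ε. -/

import Mathlib

namespace SL2Deform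

/-- The index set `ℤ_ε = {j : ℤ | (-1)^j = ε}`, for a sign `ε ∈ {1, -1}`
(i.e. a unit of `ℤ`). -/
abbrev idx (ε : ℤˣ) : Type := {j : ℤ // (-1 : ℤˣ) ^ j = ε}

/-- `V ε`: the complex vector space of finitely supported functions on `ℤ_ε`,
with standard basis `{v_j}`. -/
abbrev V (ε : ℤˣ) : Type := idx ε →₀ ℂ

/-- The standard basis vector `v_j` of `V ε`, for `j ∈ ℤ_ε`. -/
noncomputable def bv (ε : ℤˣ) (j : ℤ) (h : (-1 : ℤˣ) ^ j = ε) : V ε :=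
  Finsupp.single ⟨j, h⟩ 1

lemma parity_two : (-1 : ℤˣ) ^ (2 : ℤ) = 1 := by decide
lemma parity_neg_two : (-1 : ℤˣ) ^ (-2 : ℤ) = 1 := by decide
lemma parity_zero : (-1 : ℤˣ) ^ (0 : ℤ) = 1 := by decide

lemma parity_shift {ε : ℤˣ} {j : ℤ} (h : (-1 : ℤˣ) ^ j = ε) {s : ℤ}
    (hs : (-1 : ℤˣ) ^ s = 1) : (-1 : ℤˣ) ^ (j + s) = ε := by
  rw [zpow_add, h, hs, mul_one]

/-- If `m ∈ ℤ_{-ε}` then `m + 1 ∈ ℤ_ε`. -/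
lemma parity_succ {ε : ℤˣ} {m : ℤ} (h : (-1 : ℤˣ) ^ m = -ε) :
    (-1 : ℤˣ) ^ (m + 1) = ε := by
  rw [zpow_add, h, zpow_one]
  simp

/-- If `m ∈ ℤ_{-ε}` then `m - 1 ∈ ℤ_ε`. -/
lemma parity_pred {ε : ℤˣ} {m : ℤ} (h : (-1 : ℤˣ) ^ m = -ε) :
    (-1 : ℤˣ) ^ (m - 1) = ε := by
  rw [sub_eq_add_neg, zpow_add, h, zpow_neg, zpow_one]
  simp

/-- The linear operator on `V ε` sending `v_j` to `c j • v_{j+s}`,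
for an even shift `s`. -/
noncomputable def shiftOp (ε : ℤˣ) (s : ℤ) (hs : (-1 : ℤˣ) ^ s = 1) (c : ℤ → ℂ) :
    V ε →ₗ[ℂ] V ε :=
  Finsupp.lsum ℂ fun j =>
    LinearMap.toSpanSingleton ℂ (V ε)
      (Finsupp.single ⟨j.1 + s, parity_shift j.2 hs⟩ (c j.1))

/-- `H v_j = j • v_j`. -/
noncomputable def Hop (ε : ℤˣ) : V ε →ₗ[ℂ] V ε :=
  shiftOp ε 0 parity_zero fun j => (j : ℂ)

/-- Principal series: `E v_j = ½(ν + j + 1) • v_{j+2}`. -/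
noncomputable def Eop (ε : ℤˣ) (ν : ℂ) : V ε →ₗ[ℂ] V ε :=
  shiftOp ε 2 parity_two fun j => (1 / 2 : ℂ) * (ν + j + 1)

/-- Principal series: `F v_j = ½(ν - j + 1) • v_{j-2}`. -/
noncomputable def Fop (ε : ℤˣ) (ν : ℂ) : V ε →ₗ[ℂ] V ε :=
  shiftOp ε (-2) parity_neg_two fun j => (1 / 2 : ℂ) * (ν - j + 1)

/-- `f_m(ν) = ½ |ν²-m²|^{1/2} (ν+m)/|ν+m|` for `ν ≠ -m`, and `f_m(-m) = 0`. -/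
noncomputable def fm (m : ℤ) (ν : ℂ) : ℂ :=
  if ν = -(m : ℂ) then 0
  else (1 / 2 : ℂ) * (Real.sqrt (‖ν ^ 2 - (m : ℂ) ^ 2‖) : ℝ) * (ν + m) /
    (‖ν + (m : ℂ)‖ : ℝ)

/-- Deformed module: `E v_{m-1} = f_m(ν) • v_{m+1}`, i.e. `E v_j = f_{j+1}(ν) • v_{j+2}`. -/
noncomputable def PEop (ε : ℤˣ) (ν : ℂ) : V ε →ₗ[ℂ] V ε :=
  shiftOp ε 2 parity_two fun j => fm (j + 1) ν

/-- Deformed module: `F v_{m+1} = f_{-m}(ν) • v_{m-1}`, i.e. `F v_j = f_{-(j-1)}(ν) • v_{j-2}`. -/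
noncomputable def PFop (ε : ℤˣ) (ν : ℂ) : V ε →ₗ[ℂ] V ε :=
  shiftOp ε (-2) parity_neg_two fun j => fm (1 - j) ν

/-- The module `π'(ε,ν)`: `E v_{m-1} = ½(ν - |m|) • v_{m+1}`,
i.e. `E v_j = ½(ν - |j+1|) • v_{j+2}`. -/
noncomputable def E'op (ε : ℤˣ) (ν : ℂ) : V ε →ₗ[ℂ] V ε :=
  shiftOp ε 2 parity_two fun j => (1 / 2 : ℂ) * (ν - ((|j + 1| : ℤ) : ℂ))

/-- The module `π'(ε,ν)`: `F v_{m+1} = ½(ν + |m|) • v_{m-1}`,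
i.e. `F v_j = ½(ν + |j-1|) • v_{j-2}`. -/
noncomputable def F'op (ε : ℤˣ) (ν : ℂ) : V ε →ₗ[ℂ] V ε :=
  shiftOp ε (-2) parity_neg_two fun j => (1 / 2 : ℂ) * (ν + ((|j - 1| : ℤ) : ℂ))

/-- `ν ∈ ℤ_{-ε}`: `ν` is an integer with `(-1)^ν = -ε`. -/
def inZminus (ε : ℤˣ) (ν : ℂ) : Prop :=
  ∃ n : ℤ, ν = (n : ℂ) ∧ (-1 : ℤˣ) ^ n = -ε

section ModuleNotions

variable {M : Type*} [AddCommGroup M] [Module ℂ M]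
variable {N : Type*} [AddCommGroup N] [Module ℂ N]

/-- `W` is a submodule for the module with operators `A, B, C`: it is invariant
under all three operators. -/
def Invariant (A B C : M →ₗ[ℂ] M) (W : Submodule ℂ M) : Prop :=
  (∀ x ∈ W, A x ∈ W) ∧ (∀ x ∈ W, B x ∈ W) ∧ (∀ x ∈ W, C x ∈ W)

/-- The module with operators `A, B, C` is irreducible: its only submodules are
`0` and the whole space. -/
def IsIrreducibleRep (A B C : M →ₗ[ℂ] M) : Prop :=
  ∀ W : Submodule ℂ M, Invariant A B C W → W = ⊥ ∨ W = ⊤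

/-- `W` is an irreducible submodule: invariant, nonzero, and with no nonzero
proper invariant subspace. -/
def IsIrreducibleSubmodule (A B C : M →ₗ[ℂ] M) (W : Submodule ℂ M) : Prop :=
  Invariant A B C W ∧ W ≠ ⊥ ∧
    ∀ U : Submodule ℂ M, Invariant A B C U → U ≤ W → U = ⊥ ∨ U = W

/-- The module with operators `A, B, C` is completely reducible: every invariant
subspace has an invariant complement. -/
def CompletelyReducible (A B C : M →ₗ[ℂ] M) : Prop :=
  ∀ W : Submodule ℂ M, Invariant A B C W →
    ∃ U : Submodule ℂ M, Invariant A B C U ∧ IsCompl W U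

/-- The two modules (given by operator triples) are isomorphic. -/
def Intertwined (A B C : M →ₗ[ℂ] M) (A' B' C' : N →ₗ[ℂ] N) : Prop :=
  ∃ e : M ≃ₗ[ℂ] N, (∀ x, e (A x) = A' (e x)) ∧ (∀ x, e (B x) = B' (e x)) ∧
    (∀ x, e (C x) = C' (e x))

/-- An invariant Hermitian form for the module with operators `A, B, C`
(`A` playing the role of `H`, `B` of `E`, `C` of `F`): a sesquilinear form,
conjugate-symmetric, with `⟨Hv,w⟩ = ⟨v,Hw⟩`, `⟨Ev,w⟩ + ⟨v,Fw⟩ = 0`,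
`⟨Fv,w⟩ + ⟨v,Ew⟩ = 0`. -/
structure IsInvHermForm (A B C : M →ₗ[ℂ] M) (Φ : M → M → ℂ) : Prop where
  add_left : ∀ u v w, Φ (u + v) w = Φ u w + Φ v w
  smul_left : ∀ (a : ℂ) (v w : M), Φ (a • v) w = a * Φ v w
  conj_symm : ∀ v w, Φ w v = (starRingEnd ℂ) (Φ v w)
  inv_A : ∀ v w, Φ (A v) w = Φ v (A w)
  inv_BC : ∀ v w, Φ (B v) w + Φ v (C w) = 0
  inv_CB : ∀ v w, Φ (C v) w + Φ v (B w) = 0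

end ModuleNotions

/-- `span{v_j : j ≥ n}`. -/
noncomputable def spanGE (ε : ℤˣ) (n : ℤ) : Submodule ℂ (V ε) :=
  Submodule.span ℂ {x : V ε | ∃ j : idx ε, n ≤ j.1 ∧ x = Finsupp.single j 1}

/-- `span{v_j : j ≤ n}`. -/
noncomputable def spanLE (ε : ℤˣ) (n : ℤ) : Submodule ℂ (V ε) :=
  Submodule.span ℂ {x : V ε | ∃ j : idx ε, j.1 ≤ n ∧ x = Finsupp.single j 1}

/-- `span{v_j : |j| ≤ n}`. -/
noncomputable def spanAbsLE (ε : ℤˣ) (n : ℤ) : Submodule ℂ (V ε) :=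
  Submodule.span ℂ {x : V ε | ∃ j : idx ε, |j.1| ≤ n ∧ x = Finsupp.single j 1}

/-- The diagonal operator `S v_j = c j • v_j`. -/
noncomputable def diagMap (ε : ℤˣ) (c : idx ε → ℂ) : V ε →ₗ[ℂ] V ε :=
  Finsupp.lsum ℂ fun j => LinearMap.toSpanSingleton ℂ (V ε) (Finsupp.single j (c j))


section AuxLemmas

lemma bv_congr {ε : ℤˣ} {j j' : ℤ} (e : j = j') (h : (-1:ℤˣ)^j = ε) (h' : (-1:ℤˣ)^j' = ε) :
    bv ε j h = bv ε j' h' := by subst e; rfl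

lemma shiftOp_single {ε : ℤˣ} (s : ℤ) (hs : (-1 : ℤˣ) ^ s = 1) (c : ℤ → ℂ)
    (j : ℤ) (h : (-1:ℤˣ)^j = ε) :
    shiftOp ε s hs c (bv ε j h) = c j • bv ε (j + s) (parity_shift h hs) := by
  unfold shiftOp bv
  rw [Finsupp.lsum_single, LinearMap.toSpanSingleton_apply, one_smul,
    Finsupp.smul_single', mul_one]

lemma Hop_single {ε : ℤˣ} (j : idx ε) :
    Hop ε (Finsupp.single j 1) = (j.1 : ℂ) • Finsupp.single j 1 := by
  have h := shiftOp_single (ε := ε) 0 parity_zero (fun j => (j:ℂ)) j.1 j.2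
  rw [bv_congr (add_zero j.1) (parity_shift j.2 parity_zero) j.2] at h
  exact h

lemma PEop_bv {ε : ℤˣ} (ν : ℂ) (m : ℤ) (h : (-1:ℤˣ)^(m-1) = ε) (h' : (-1:ℤˣ)^(m+1) = ε) :
    PEop ε ν (bv ε (m-1) h) = fm m ν • bv ε (m+1) h' := by
  have hh := shiftOp_single (ε:=ε) 2 parity_two (fun j => fm (j+1) ν) (m-1) h
  rw [bv_congr (show m-1+2 = m+1 by ring) (parity_shift h parity_two) h'] at hh
  rw [show m-1+1 = m by ring] at hh
  exact hh

lemma PFop_bv {ε : ℤˣ} (ν : ℂ) (m : ℤ) (h : (-1:ℤˣ)^(m+1) = ε) (h' : (-1:ℤˣ)^(m-1) = ε) :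
    PFop ε ν (bv ε (m+1) h) = fm (-m) ν • bv ε (m-1) h' := by
  have hh := shiftOp_single (ε:=ε) (-2) parity_neg_two (fun j => fm (1-j) ν) (m+1) h
  rw [bv_congr (show m+1+(-2) = m-1 by ring) (parity_shift h parity_neg_two) h'] at hh
  rw [show 1-(m+1) = -m by ring] at hh
  exact hh

/-- Real-valued version of `fm` for real `ν`. -/
noncomputable def rfm (m : ℤ) (ν : ℝ) : ℝ :=
  1 / 2 * Real.sqrt |ν ^ 2 - (m : ℝ) ^ 2| * (ν + m) / |ν + (m : ℝ)|

lemma fm_eq_rfm (m : ℤ) (ν : ℝ) (h : ν ≠ -(m : ℝ)) : fm m (ν : ℂ) = ((rfm m ν : ℝ) : ℂ) := by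
  have hne : (ν : ℂ) ≠ -(m : ℂ) := by
    intro hc; apply h
    have : ((ν : ℝ) : ℂ) = ((-(m:ℝ) : ℝ) : ℂ) := by push_cast; exact hc
    exact_mod_cast this
  rw [fm, if_neg hne, rfm]
  have h1 : (ν:ℂ)^2 - (m:ℂ)^2 = ((ν^2 - (m:ℝ)^2 : ℝ) : ℂ) := by push_cast; ring
  have h2 : (ν:ℂ) + (m:ℂ) = ((ν + (m:ℝ) : ℝ) : ℂ) := by push_cast; ring
  rw [h1, h2, Complex.norm_real, Complex.norm_real, Real.norm_eq_abs, Real.norm_eq_abs]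
  push_cast
  ring

lemma rfm_ne_zero (m : ℤ) (ν : ℝ) (h1 : ν ≠ (m:ℝ)) (h2 : ν ≠ -(m:ℝ)) : rfm m ν ≠ 0 := by
  have ha : ν + (m:ℝ) ≠ 0 := fun hc => h2 (by linarith)
  have hb : ν - (m:ℝ) ≠ 0 := fun hc => h1 (by linarith)
  have hd : ν^2 - (m:ℝ)^2 ≠ 0 := by
    intro hc
    rcases mul_eq_zero.1 (show (ν - m) * (ν + m) = 0 by linear_combination hc) with h|h
    · exact hb h
    · exact ha h
  have hs : Real.sqrt |ν^2 - (m:ℝ)^2| ≠ 0 :=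
    ne_of_gt (Real.sqrt_pos.mpr (abs_pos.mpr hd))
  exact div_ne_zero (mul_ne_zero (mul_ne_zero (by norm_num) hs) ha) (abs_ne_zero.mpr ha)

lemma div_abs_eq_sign (x : ℝ) (hx : x ≠ 0) : x / |x| = Real.sign x := by
  rcases lt_or_gt_of_ne hx with h|h
  · rw [abs_of_neg h, Real.sign_of_neg h, div_neg, div_self hx]
  · rw [abs_of_pos h, Real.sign_of_pos h, div_self hx]

lemma rfm_neg_eq (m : ℤ) (ν : ℝ) (h1 : ν ≠ (m:ℝ)) (h2 : ν ≠ -(m:ℝ)) :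
    rfm (-m) ν = Real.sign (ν^2 - (m:ℝ)^2) * rfm m ν := by
  have ha : ν + (m:ℝ) ≠ 0 := fun hc => h2 (by linarith)
  have hb : ν - (m:ℝ) ≠ 0 := fun hc => h1 (by linarith)
  have hsgn : Real.sign (ν - (m:ℝ)) = Real.sign (ν^2 - (m:ℝ)^2) * Real.sign (ν + m) := by
    rcases lt_or_gt_of_ne ha with hA|hA <;> rcases lt_or_gt_of_ne hb with hB|hB
    · rw [Real.sign_of_neg hB, Real.sign_of_pos (by nlinarith : (0:ℝ) < ν^2 - (m:ℝ)^2),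
        Real.sign_of_neg hA]; norm_num
    · rw [Real.sign_of_pos hB, Real.sign_of_neg (by nlinarith : ν^2 - (m:ℝ)^2 < 0),
        Real.sign_of_neg hA]; norm_num
    · rw [Real.sign_of_neg hB, Real.sign_of_neg (by nlinarith : ν^2 - (m:ℝ)^2 < 0),
        Real.sign_of_pos hA]; norm_num
    · rw [Real.sign_of_pos hB, Real.sign_of_pos (by nlinarith : (0:ℝ) < ν^2 - (m:ℝ)^2),
        Real.sign_of_pos hA]; norm_num
  unfold rfm
  rw [Int.cast_neg, show ν ^ 2 - (-(m:ℝ)) ^ 2 = ν^2 - (m:ℝ)^2 by ring,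
      show ν + -(m:ℝ) = ν - (m:ℝ) by ring, mul_div_assoc, mul_div_assoc,
      div_abs_eq_sign _ ha, div_abs_eq_sign _ hb, hsgn]
  ring

lemma neg_one_zpow_odd (d : ℤ) (h : Odd d) : (-1:ℤˣ)^d = -1 := by
  obtain ⟨k, rfl⟩ := h
  rw [zpow_add, zpow_one, zpow_mul, parity_two, one_zpow, one_mul]

lemma neg_one_zpow_even (d : ℤ) (h : Even d) : (-1:ℤˣ)^d = 1 := by
  obtain ⟨k, rfl⟩ := h
  rw [← two_mul, zpow_mul, parity_two, one_zpow]

lemma parity_add_one {ε : ℤˣ} {j : ℤ} (h : (-1:ℤˣ)^j = ε) : (-1:ℤˣ)^(j+1) = -ε := by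
  rw [zpow_add, h, zpow_one, mul_neg_one]

lemma parity_sub_one {ε : ℤˣ} {j : ℤ} (h : (-1:ℤˣ)^j = ε) : (-1:ℤˣ)^(j-1) = -ε := by
  rw [sub_eq_add_neg, zpow_add, h, zpow_neg, zpow_one]
  rcases Int.units_eq_one_or ε with hε|hε <;> rw [hε] <;> decide

end AuxLemmas

/-- For real `ν ∉ ℤ_{-ε}` and an invariant Hermitian form on `Π(ε,ν)`
normalized by `⟨v_0,v_0⟩ = 1` (when `ε = 1`) or `⟨v_1,v_1⟩ = 1` (when `ε = -1`):
`⟨v_i,v_j⟩ = 0` for `i ≠ j`; for every `m ∈ ℤ_{-ε}`,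
`⟨v_{m+1}, v_{m+1}⟩ = -sgn(ν² - m²)·⟨v_{m-1}, v_{m-1}⟩`; and `⟨v_j,v_j⟩ = ±1`
for every `j ∈ ℤ_ε`. -/
theorem deformed_herm_form_signs (ε : ℤˣ) (ν : ℝ) (hν : ¬ inZminus ε (ν : ℂ))
    (Φ : V ε → V ε → ℂ)
    (hΦ : IsInvHermForm (Hop ε) (PEop ε (ν : ℂ)) (PFop ε (ν : ℂ)) Φ)
    (hnorm0 : ∀ h : (-1 : ℤˣ) ^ (0 : ℤ) = ε, Φ (bv ε 0 h) (bv ε 0 h) = 1)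
    (hnorm1 : ∀ h : (-1 : ℤˣ) ^ (1 : ℤ) = ε, Φ (bv ε 1 h) (bv ε 1 h) = 1) :
    (∀ i j : idx ε, i ≠ j → Φ (Finsupp.single i 1) (Finsupp.single j 1) = 0) ∧
    (∀ (m : ℤ) (hm : (-1 : ℤˣ) ^ m = -ε),
      Φ (bv ε (m + 1) (parity_succ hm)) (bv ε (m + 1) (parity_succ hm)) =
        -((Real.sign (ν ^ 2 - (m : ℝ) ^ 2) : ℝ) : ℂ) *
          Φ (bv ε (m - 1) (parity_pred hm)) (bv ε (m - 1) (parity_pred hm))) ∧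
    (∀ j : idx ε, Φ (Finsupp.single j 1) (Finsupp.single j 1) = 1 ∨
      Φ (Finsupp.single j 1) (Finsupp.single j 1) = -1) := by
  classical
  have smulR : ∀ (a : ℂ) (v w : V ε), Φ v (a • w) = (starRingEnd ℂ) a * Φ v w := by
    intro a v w
    rw [hΦ.conj_symm (a • w) v, hΦ.smul_left, map_mul, ← hΦ.conj_symm w v]
  have hnu : ∀ n : ℤ, (-1:ℤˣ)^n = -ε → ν ≠ (n:ℝ) := by
    intro n hn hc
    exact hν ⟨n, by exact_mod_cast hc, hn⟩
  have hnu' : ∀ m : ℤ, (-1:ℤˣ)^m = -ε → ν ≠ -(m:ℝ) := by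
    intro m hm
    have hmm : (-1:ℤˣ)^(-m) = -ε := by
      rw [zpow_neg, hm]
      rcases Int.units_eq_one_or ε with h|h <;> rw [h] <;> decide
    have := hnu (-m) hmm
    push_cast at this
    exact this
  have part1 : ∀ i j : idx ε, i ≠ j → Φ (Finsupp.single i 1) (Finsupp.single j 1) = 0 := by
    intro i j hij
    have hE := hΦ.inv_A (Finsupp.single i 1) (Finsupp.single j 1)
    rw [Hop_single, Hop_single, hΦ.smul_left, smulR, map_intCast] at hE
    have hij' : (i.1 : ℂ) ≠ (j.1 : ℂ) := by
      intro hc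
      exact hij (Subtype.ext (by exact_mod_cast hc))
    have h0 : ((i.1:ℂ) - j.1) * Φ (Finsupp.single i 1) (Finsupp.single j 1) = 0 := by
      linear_combination hE
    rcases mul_eq_zero.1 h0 with h|h
    · exact absurd h (sub_ne_zero.mpr hij')
    · exact h
  have part2 : ∀ (m : ℤ) (hm : (-1 : ℤˣ) ^ m = -ε),
      Φ (bv ε (m + 1) (parity_succ hm)) (bv ε (m + 1) (parity_succ hm)) =
        -((Real.sign (ν ^ 2 - (m : ℝ) ^ 2) : ℝ) : ℂ) *
          Φ (bv ε (m - 1) (parity_pred hm)) (bv ε (m - 1) (parity_pred hm)) := by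
    intro m hm
    have hm1 : ν ≠ (m:ℝ) := hnu m hm
    have hm2 : ν ≠ -(m:ℝ) := hnu' m hm
    have hE := hΦ.inv_BC (bv ε (m-1) (parity_pred hm)) (bv ε (m+1) (parity_succ hm))
    rw [PEop_bv (ν:ℂ) m (parity_pred hm) (parity_succ hm),
        PFop_bv (ν:ℂ) m (parity_succ hm) (parity_pred hm),
        hΦ.smul_left, smulR, fm_eq_rfm m ν hm2,
        fm_eq_rfm (-m) ν (by push_cast; simpa using hm1),
        Complex.conj_ofReal, rfm_neg_eq m ν hm1 hm2] at hE
    push_cast at hE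
    have hc : ((rfm m ν : ℝ) : ℂ) ≠ 0 := by
      exact_mod_cast rfm_ne_zero m ν hm1 hm2
    apply mul_left_cancel₀ hc
    linear_combination hE
  have signC : ∀ m : ℤ, (-1:ℤˣ)^m = -ε →
      ((Real.sign (ν^2 - (m:ℝ)^2) : ℝ) : ℂ) = 1 ∨
      ((Real.sign (ν^2 - (m:ℝ)^2) : ℝ) : ℂ) = -1 := by
    intro m hm
    have hm1 := hnu m hm
    have hm2 := hnu' m hm
    have hd : ν^2 - (m:ℝ)^2 ≠ 0 := by
      intro hc
      rcases mul_eq_zero.1 (show (ν - m) * (ν + m) = 0 by linear_combination hc) with h|h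
      · exact hm1 (by linarith)
      · exact hm2 (by linarith)
    rcases lt_or_gt_of_ne hd with h|h
    · right; rw [Real.sign_of_neg h]; norm_num
    · left; rw [Real.sign_of_pos h]; norm_num
  have stepUp : ∀ (m : ℤ) (hm : (-1:ℤˣ)^m = -ε),
      (Φ (bv ε (m-1) (parity_pred hm)) (bv ε (m-1) (parity_pred hm)) = 1 ∨
       Φ (bv ε (m-1) (parity_pred hm)) (bv ε (m-1) (parity_pred hm)) = -1) →
      (Φ (bv ε (m+1) (parity_succ hm)) (bv ε (m+1) (parity_succ hm)) = 1 ∨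
       Φ (bv ε (m+1) (parity_succ hm)) (bv ε (m+1) (parity_succ hm)) = -1) := by
    intro m hm h
    have hr := part2 m hm
    rcases signC m hm with hs|hs <;> rcases h with h|h <;> rw [hr, hs, h] <;> norm_num
  have stepDown : ∀ (m : ℤ) (hm : (-1:ℤˣ)^m = -ε),
      (Φ (bv ε (m+1) (parity_succ hm)) (bv ε (m+1) (parity_succ hm)) = 1 ∨
       Φ (bv ε (m+1) (parity_succ hm)) (bv ε (m+1) (parity_succ hm)) = -1) →
      (Φ (bv ε (m-1) (parity_pred hm)) (bv ε (m-1) (parity_pred hm)) = 1 ∨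
       Φ (bv ε (m-1) (parity_pred hm)) (bv ε (m-1) (parity_pred hm)) = -1) := by
    intro m hm h
    have hr := part2 m hm
    rcases signC m hm with hs|hs <;> rcases h with h|h <;> rw [hr, hs] at h <;>
      first
        | (left; linear_combination h)
        | (left; linear_combination -h)
        | (right; linear_combination h)
        | (right; linear_combination -h)
  have main : ∀ (j0 : ℤ) (hj0 : (-1:ℤˣ)^j0 = ε),
      Φ (bv ε j0 hj0) (bv ε j0 hj0) = 1 →
      ∀ j : idx ε, Φ (Finsupp.single j 1) (Finsupp.single j 1) = 1 ∨
        Φ (Finsupp.single j 1) (Finsupp.single j 1) = -1 := by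
    intro j0 hj0 hbase j
    have up : ∀ n : ℕ, ∀ h : (-1:ℤˣ)^(j0 + 2*(n:ℤ)) = ε,
        Φ (bv ε (j0 + 2*(n:ℤ)) h) (bv ε (j0 + 2*(n:ℤ)) h) = 1 ∨
        Φ (bv ε (j0 + 2*(n:ℤ)) h) (bv ε (j0 + 2*(n:ℤ)) h) = -1 := by
      intro n
      induction n with
      | zero =>
        intro h
        rw [bv_congr (by push_cast; ring : j0 + 2*((0:ℕ):ℤ) = j0) h hj0]
        left; exact hbase
      | succ k ih =>
        intro h
        have hk : (-1:ℤˣ)^(j0 + 2*(k:ℤ)) = ε :=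
          parity_shift hj0 (neg_one_zpow_even _ ⟨(k:ℤ), by ring⟩)
        have hm : (-1:ℤˣ)^(j0 + 2*(k:ℤ) + 1) = -ε := parity_add_one hk
        have hyp : Φ (bv ε (j0 + 2*(k:ℤ) + 1 - 1) (parity_pred hm))
              (bv ε (j0 + 2*(k:ℤ) + 1 - 1) (parity_pred hm)) = 1 ∨
            Φ (bv ε (j0 + 2*(k:ℤ) + 1 - 1) (parity_pred hm))
              (bv ε (j0 + 2*(k:ℤ) + 1 - 1) (parity_pred hm)) = -1 := by
          rw [bv_congr (show j0 + 2*(k:ℤ) + 1 - 1 = j0 + 2*(k:ℤ) by ring) (parity_pred hm) hk]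
          exact ih hk
        have hst := stepUp (j0 + 2*(k:ℤ) + 1) hm hyp
        rw [bv_congr (show j0 + 2*(k:ℤ) + 1 + 1 = j0 + 2*(((k+1):ℕ):ℤ) by push_cast; ring)
          (parity_succ hm) h] at hst
        exact hst
    have down : ∀ n : ℕ, ∀ h : (-1:ℤˣ)^(j0 - 2*(n:ℤ)) = ε,
        Φ (bv ε (j0 - 2*(n:ℤ)) h) (bv ε (j0 - 2*(n:ℤ)) h) = 1 ∨
        Φ (bv ε (j0 - 2*(n:ℤ)) h) (bv ε (j0 - 2*(n:ℤ)) h) = -1 := by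
      intro n
      induction n with
      | zero =>
        intro h
        rw [bv_congr (by push_cast; ring : j0 - 2*((0:ℕ):ℤ) = j0) h hj0]
        left; exact hbase
      | succ k ih =>
        intro h
        have hk : (-1:ℤˣ)^(j0 - 2*(k:ℤ)) = ε := by
          rw [sub_eq_add_neg]
          exact parity_shift hj0 (neg_one_zpow_even _ ⟨-(k:ℤ), by ring⟩)
        have hm : (-1:ℤˣ)^(j0 - 2*(k:ℤ) - 1) = -ε := parity_sub_one hk
        have hyp : Φ (bv ε (j0 - 2*(k:ℤ) - 1 + 1) (parity_succ hm))
              (bv ε (j0 - 2*(k:ℤ) - 1 + 1) (parity_succ hm)) = 1 ∨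
            Φ (bv ε (j0 - 2*(k:ℤ) - 1 + 1) (parity_succ hm))
              (bv ε (j0 - 2*(k:ℤ) - 1 + 1) (parity_succ hm)) = -1 := by
          rw [bv_congr (show j0 - 2*(k:ℤ) - 1 + 1 = j0 - 2*(k:ℤ) by ring) (parity_succ hm) hk]
          exact ih hk
        have hst := stepDown (j0 - 2*(k:ℤ) - 1) hm hyp
        rw [bv_congr (show j0 - 2*(k:ℤ) - 1 - 1 = j0 - 2*(((k+1):ℕ):ℤ) by push_cast; ring)
          (parity_pred hm) h] at hst
        exact hst
    have hpar : (-1:ℤˣ)^(j.1 - j0) = 1 := by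
      rw [zpow_sub, j.2, hj0]
      simp
    have heven : Even (j.1 - j0) := by
      by_contra hodd
      rw [Int.not_even_iff_odd] at hodd
      rw [neg_one_zpow_odd _ hodd] at hpar
      exact absurd hpar (by decide)
    obtain ⟨k, hk2⟩ := heven
    have hj : Finsupp.single j (1:ℂ) = bv ε j.1 j.2 := rfl
    rw [hj]
    rcases le_or_gt 0 k with hk0|hk0
    · have e : j.1 = j0 + 2*((k.toNat:ℕ):ℤ) := by
        rw [Int.toNat_of_nonneg hk0]; omega
      have h' : (-1:ℤˣ)^(j0 + 2*((k.toNat:ℕ):ℤ)) = ε := by rw [← e]; exact j.2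
      rw [bv_congr e j.2 h']
      exact up k.toNat h'
    · have e : j.1 = j0 - 2*(((-k).toNat:ℕ):ℤ) := by
        rw [Int.toNat_of_nonneg (by omega : (0:ℤ) ≤ -k)]; omega
      have h' : (-1:ℤˣ)^(j0 - 2*(((-k).toNat:ℕ):ℤ)) = ε := by rw [← e]; exact j.2
      rw [bv_congr e j.2 h']
      exact down (-k).toNat h'
  refine ⟨part1, part2, ?_⟩
  rcases Int.units_eq_one_or ε with hε|hε
  · have hj0 : (-1:ℤˣ)^(0:ℤ) = ε := by rw [hε]; exact parity_zero
    exact main 0 hj0 (hnorm0 hj0)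
  · have hj0 : (-1:ℤˣ)^(1:ℤ) = ε := by rw [hε, zpow_one]
    exact main 1 hj0 (hnorm1 hj0)

end SL2Deform
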